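/- Let R be an integral domain of characteristic zero and 𝔲 a set of derivations of R, with filtration G_i = {x ∈ R : every composite D_{i+1} ∘ ⋯ ∘ D_1 of i+1 derivations from 𝔲 annihilates x} for i ≥ 0, and assume that every element of R lies in some G_i. For x ≠ 0 let ι(x) be the least i ≥ 0 with x ∈ G_i. Then ι is additive: for all nonzero x, y ∈ R, ι(x·y) = ι(x) + ι(y). -/

import Mathlib

/-- Apply a list of operators to an element, the head of the list being applied first. -/
def iterApp {R : Type*} : List (R → R) → R → R
  | [], x => x
  | D :: Ds, x => iterApp Ds (D x)

/-- A derivation of a commutative ring: an additive map satisfying the Leibniz rule. -/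
def IsDerivation {R : Type*} [CommRing R] (D : R → R) : Prop :=
  (∀ a b : R, D (a + b) = D a + D b) ∧ (∀ a b : R, D (a * b) = D a * b + a * D b)

/-- For `i ≥ 0`, the `i`-th Socle piece: elements annihilated by every composite of
`i + 1` derivations from `u`. -/
def SocleGNat {R : Type*} [CommRing R] (u : Set (R → R)) (i : ℕ) : Set R :=
  {x | ∀ Ds : List (R → R), (∀ D ∈ Ds, D ∈ u) → Ds.length = i + 1 → iterApp Ds x = 0}

/-- `iota u x` is the least `i ≥ 0` with `x ∈ G i`. -/
noncomputable def iota {R : Type*} [CommRing R] (u : Set (R → R)) (x : R) : ℕ :=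
  sInf {i : ℕ | x ∈ SocleGNat u i}



namespace IotaMulAux

variable {α : Type*} {γ : Type*}

/-- All ordered splittings of a list into a pair of subsequences. -/
def splittings : List α → List (List α × List α)
  | [] => [([], [])]
  | D :: l =>
      ((splittings l).map fun p => (D :: p.1, p.2)) ++
      ((splittings l).map fun p => (p.1, D :: p.2))

/-- All interleavings (shuffles) of two lists. -/
def interleavings : List α → List α → List (List α)
  | [], v => [v]
  | u, [] => [u]
  | a :: u, b :: v =>
      ((interleavings u (b :: v)).map (a :: ·)) ++
      ((interleavings (a :: u) v).map (b :: ·))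
termination_by u v => u.length + v.length

theorem interleavings_nil_left (v : List α) : interleavings [] v = [v] := by
  cases v <;> simp [interleavings]

theorem interleavings_cons_nil (a : α) (u : List α) :
    interleavings (a :: u) [] = [a :: u] := by simp [interleavings]

theorem interleavings_cons_cons (a b : α) (u v : List α) :
    interleavings (a :: u) (b :: v) =
      ((interleavings u (b :: v)).map (a :: ·)) ++
      ((interleavings (a :: u) v).map (b :: ·)) := by
  rw [interleavings]

theorem splittings_length {w : List α} {p : List α × List α} (hp : p ∈ splittings w) :
    p.1.length + p.2.length = w.length := by
  induction w generalizing p with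
  | nil => simp [splittings] at hp; simp [hp]
  | cons D l ih =>
    simp only [splittings, List.mem_append, List.mem_map] at hp
    rcases hp with ⟨q, hq, rfl⟩ | ⟨q, hq, rfl⟩ <;> have := ih hq <;> simp <;> omega

theorem splittings_subset {w : List α} {p : List α × List α} (hp : p ∈ splittings w) :
    (∀ e ∈ p.1, e ∈ w) ∧ (∀ e ∈ p.2, e ∈ w) := by
  induction w generalizing p with
  | nil => simp [splittings] at hp; simp [hp]
  | cons D l ih =>
    simp only [splittings, List.mem_append, List.mem_map] at hp
    rcases hp with ⟨q, hq, rfl⟩ | ⟨q, hq, rfl⟩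
    · refine ⟨?_, ?_⟩ <;> intro e he
      · rcases List.mem_cons.mp he with rfl | he'
        · exact List.mem_cons_self
        · exact List.mem_cons_of_mem _ ((ih hq).1 e he')
      · exact List.mem_cons_of_mem _ ((ih hq).2 e he)
    · refine ⟨?_, ?_⟩ <;> intro e he
      · exact List.mem_cons_of_mem _ ((ih hq).1 e he)
      · rcases List.mem_cons.mp he with rfl | he'
        · exact List.mem_cons_self
        · exact List.mem_cons_of_mem _ ((ih hq).2 e he')

theorem splittings_map (h : α → γ) (w : List α) :
    splittings (w.map h) = (splittings w).map fun p => (p.1.map h, p.2.map h) := by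
  induction w with
  | nil => simp [splittings]
  | cons D l ih =>
    simp only [List.map_cons, splittings, ih, List.map_map, List.map_append]
    congr 1 <;> exact List.map_congr_left fun p _ => by simp

theorem nil_left_mem_splittings (b : List α) : (([] : List α), b) ∈ splittings b := by
  induction b with
  | nil => simp [splittings]
  | cons c v ih =>
    simp only [splittings, List.mem_append, List.mem_map]
    exact Or.inr ⟨([], v), ih, rfl⟩

theorem nil_right_mem_splittings (a : List α) : (a, ([] : List α)) ∈ splittings a := by
  induction a with
  | nil => simp [splittings]
  | cons c v ih =>
    simp only [splittings, List.mem_append, List.mem_map]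
    exact Or.inl ⟨(v, []), ih, rfl⟩

theorem mem_splittings_of_mem_interleavings :
    ∀ (a b w : List α), w ∈ interleavings a b → (a, b) ∈ splittings w
  | [], b, w, hw => by
      rw [interleavings_nil_left] at hw
      simp at hw; subst hw; exact nil_left_mem_splittings _
  | a :: u, [], w, hw => by
      rw [interleavings_cons_nil] at hw
      simp at hw; subst hw; exact nil_right_mem_splittings _
  | a :: u, b :: v, w, hw => by
      rw [interleavings_cons_cons, List.mem_append] at hw
      rcases hw with hw | hw <;> rcases List.mem_map.mp hw with ⟨w', hw', rfl⟩
      · have := mem_splittings_of_mem_interleavings u (b :: v) w' hw'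
        simp only [splittings, List.mem_append, List.mem_map]
        exact Or.inl ⟨(u, b :: v), this, rfl⟩
      · have := mem_splittings_of_mem_interleavings (a :: u) v w' hw'
        simp only [splittings, List.mem_append, List.mem_map]
        exact Or.inr ⟨(a :: u, v), this, rfl⟩
  termination_by a b => a.length + b.length

theorem cons_mem_interleavings_left {w a : List α} {b : List α} {D : α}
    (h : w ∈ interleavings a b) : D :: w ∈ interleavings (D :: a) b := by
  cases b with
  | nil =>
    have hw : w = a := by
      cases a with
      | nil => rw [interleavings_nil_left] at h; simpa using h
      | cons c u => rw [interleavings_cons_nil] at h; simpa using h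
    subst hw; rw [interleavings_cons_nil]; simp
  | cons c v =>
    rw [interleavings_cons_cons, List.mem_append]
    exact Or.inl (List.mem_map_of_mem h)

theorem cons_mem_interleavings_right {w b : List α} {a : List α} {D : α}
    (h : w ∈ interleavings a b) : D :: w ∈ interleavings a (D :: b) := by
  cases a with
  | nil =>
    have hw : w = b := by rw [interleavings_nil_left] at h; simpa using h
    subst hw; rw [interleavings_nil_left]; simp
  | cons c u =>
    rw [interleavings_cons_cons, List.mem_append]
    exact Or.inr (List.mem_map_of_mem h)

theorem mem_interleavings_of_mem_splittings {w : List α} :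
    ∀ {p : List α × List α}, p ∈ splittings w → w ∈ interleavings p.1 p.2 := by
  induction w with
  | nil =>
    intro p hp; simp [splittings] at hp; subst hp
    rw [interleavings_nil_left]; simp
  | cons D l ih =>
    intro p hp
    simp only [splittings, List.mem_append, List.mem_map] at hp
    rcases hp with ⟨q, hq, rfl⟩ | ⟨q, hq, rfl⟩
    · exact cons_mem_interleavings_left (ih hq)
    · exact cons_mem_interleavings_right (ih hq)


section Ord
variable {β : Type*} [LinearOrder β]


theorem list_lt_iff {l m : List β} : l < m ↔ List.Lex (· < ·) l m := Iff.rfl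
theorem list_le_iff {l m : List β} : l ≤ m ↔ (l = m ∨ List.Lex (· < ·) l m) := Iff.rfl

theorem head_le_of_cons_le {a b : β} {l m : List β} (h : (a :: l) ≤ (b :: m)) : a ≤ b := by
  rcases list_le_iff.mp h with he | hlt
  · cases he; exact le_rfl
  · cases hlt with
    | cons _ => exact le_rfl
    | rel h' => exact h'.le

theorem tail_le_of_cons_le {a : β} {l m : List β} (h : (a :: l) ≤ (a :: m)) : l ≤ m := by
  rcases list_le_iff.mp h with he | hlt
  · cases he; exact le_rfl
  · cases hlt with
    | cons h' => exact list_le_iff.mpr (Or.inr h')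
    | rel h' => exact absurd h' (lt_irrefl a)

theorem cons_le_cons' (a : β) {l m : List β} (h : l ≤ m) : (a :: l) ≤ (a :: m) := by
  rcases list_le_iff.mp h with rfl | hlt
  · exact le_rfl
  · exact list_le_iff.mpr (Or.inr (List.Lex.cons hlt))

theorem cons_lt_cons_of_head_lt {a b : β} (h : a < b) (l m : List β) :
    (a :: l) < (b :: m) := list_lt_iff.mpr (List.Lex.rel h)

/-- The lexicographically greatest interleaving of two lists. -/
def maxInter : List β → List β → List β
  | [], v => v
  | u, [] => u
  | a :: u, b :: v =>
    if b < a then a :: maxInter u (b :: v)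
    else if a < b then b :: maxInter (a :: u) v
    else a :: max (maxInter u (b :: v)) (maxInter (a :: u) v)
termination_by u v => u.length + v.length

theorem maxInter_nil_left (v : List β) : maxInter [] v = v := by
  cases v <;> simp [maxInter]

theorem maxInter_cons_nil (a : β) (u : List β) : maxInter (a :: u) [] = a :: u := by
  simp [maxInter]

theorem maxInter_cons_cons (a b : β) (u v : List β) :
    maxInter (a :: u) (b :: v) =
      if b < a then a :: maxInter u (b :: v)
      else if a < b then b :: maxInter (a :: u) v
      else a :: max (maxInter u (b :: v)) (maxInter (a :: u) v) := by
  rw [maxInter]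


theorem maxInter_mem : ∀ (u v : List β), maxInter u v ∈ interleavings u v
  | [], v => by rw [maxInter_nil_left, interleavings_nil_left]; simp
  | a :: u, [] => by rw [maxInter_cons_nil, interleavings_cons_nil]; simp
  | a :: u, b :: v => by
    rw [maxInter_cons_cons, interleavings_cons_cons, List.mem_append]
    by_cases hba : b < a
    · rw [if_pos hba]
      exact Or.inl (List.mem_map_of_mem (maxInter_mem u (b :: v)))
    · rw [if_neg hba]
      by_cases hab : a < b
      · rw [if_pos hab]
        exact Or.inr (List.mem_map_of_mem (maxInter_mem (a :: u) v))
      · rw [if_neg hab]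
        have hE : a = b := le_antisymm (not_lt.mp hba) (not_lt.mp hab)
        rcases max_choice (maxInter u (b :: v)) (maxInter (a :: u) v) with hm | hm <;> rw [hm]
        · exact Or.inl (List.mem_map_of_mem (maxInter_mem u (b :: v)))
        · subst hE
          exact Or.inr (List.mem_map_of_mem (maxInter_mem (a :: u) v))
  termination_by u v => u.length + v.length

theorem interleavings_nil_right (u : List β) : interleavings u [] = [u] := by
  cases u with
  | nil => rw [interleavings_nil_left]
  | cons a u => rw [interleavings_cons_nil]

/-- Key lemma: among pairs componentwise below `(u, v)`, the word `maxInter u v`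
dominates all interleavings, and is attained only from the pair `(u, v)` itself. -/
theorem maxInter_spec :
    ∀ (u v u' v' w : List β), w ∈ interleavings u' v' →
      u'.length = u.length → v'.length = v.length → u' ≤ u → v' ≤ v →
      w ≤ maxInter u v ∧ (w = maxInter u v → u' = u ∧ v' = v)
  | [], v, u', v', w, hw, hlu, hlv, h1, h2 => by
      have hu' : u' = [] := List.length_eq_zero_iff.mp (by simpa using hlu)
      subst hu'
      rw [interleavings_nil_left] at hw
      simp at hw; subst hw
      rw [maxInter_nil_left]
      exact ⟨h2, fun he => ⟨rfl, he⟩⟩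
  | a :: ut, [], u', v', w, hw, hlu, hlv, h1, h2 => by
      have hv' : v' = [] := List.length_eq_zero_iff.mp (by simpa using hlv)
      subst hv'
      rw [interleavings_nil_right] at hw
      simp at hw; subst hw
      rw [maxInter_cons_nil]
      exact ⟨h1, fun he => ⟨he, rfl⟩⟩
  | a :: ut, b :: vt, u', v', w, hw, hlu, hlv, h1, h2 => by
      cases u' with
      | nil => simp at hlu
      | cons a' ut' =>
      cases v' with
      | nil => simp at hlv
      | cons b' vt' =>
      have ha' : a' ≤ a := head_le_of_cons_le h1
      have hb' : b' ≤ b := head_le_of_cons_le h2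
      have hlu' : ut'.length = ut.length := by simpa using hlu
      have hlv' : vt'.length = vt.length := by simpa using hlv
      rw [interleavings_cons_cons, List.mem_append] at hw
      rw [maxInter_cons_cons]
      rcases lt_trichotomy a b with hab | hE | hba
      · -- a < b : maxInter = b :: maxInter (a :: ut) vt
        rw [if_neg (asymm hab), if_pos hab]
        rcases hw with hw | hw <;> rcases List.mem_map.mp hw with ⟨w2, hw2, rfl⟩
        · -- w = a' :: w2 with a' ≤ a < b
          have hlt := cons_lt_cons_of_head_lt (lt_of_le_of_lt ha' hab) w2
            (maxInter (a :: ut) vt)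
          exact ⟨hlt.le, fun he => absurd he (ne_of_lt hlt)⟩
        · rcases lt_or_eq_of_le hb' with hblt | hbe
          · have hlt := cons_lt_cons_of_head_lt hblt w2 (maxInter (a :: ut) vt)
            exact ⟨hlt.le, fun he => absurd he (ne_of_lt hlt)⟩
          · subst hbe
            have hvt : vt' ≤ vt := tail_le_of_cons_le h2
            have IH := maxInter_spec (a :: ut) vt (a' :: ut') vt' w2 hw2
              (by simpa using hlu') hlv' h1 hvt
            refine ⟨cons_le_cons' b' IH.1, fun he => ?_⟩
            have hweq : w2 = maxInter (a :: ut) vt := by injection he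
            rcases IH.2 hweq with ⟨e1, e2⟩
            exact ⟨e1, by rw [e2]⟩
      · -- a = b : maxInter = a :: max M1 M2
        rw [if_neg (by rw [hE]; exact lt_irrefl b), if_neg (by rw [hE]; exact lt_irrefl b)]
        set M1 := maxInter ut (b :: vt) with hM1
        set M2 := maxInter (a :: ut) vt with hM2
        rcases hw with hw | hw <;> rcases List.mem_map.mp hw with ⟨w2, hw2, rfl⟩
        · rcases lt_or_eq_of_le ha' with halt | hae
          · have hlt := cons_lt_cons_of_head_lt halt w2 (max M1 M2)
            exact ⟨hlt.le, fun he => absurd he (ne_of_lt hlt)⟩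
          · subst hae
            have hut : ut' ≤ ut := tail_le_of_cons_le h1
            have IH := maxInter_spec ut (b :: vt) ut' (b' :: vt') w2 hw2
              hlu' (by simpa using hlv') hut h2
            refine ⟨cons_le_cons' a' (IH.1.trans (le_max_left M1 M2)), fun he => ?_⟩
            have hweq : w2 = max M1 M2 := by injection he
            have hw2M1 : w2 = M1 := le_antisymm IH.1 (hweq ▸ le_max_left M1 M2)
            rcases IH.2 hw2M1 with ⟨e1, e2⟩
            exact ⟨by rw [e1], e2⟩
        · rcases lt_or_eq_of_le hb' with hblt | hbe
          · have hlt := cons_lt_cons_of_head_lt (lt_of_lt_of_le hblt (le_of_eq hE.symm)) w2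
              (max M1 M2)
            exact ⟨hlt.le, fun he => absurd he (ne_of_lt hlt)⟩
          · subst hbe
            have hvt : vt' ≤ vt := tail_le_of_cons_le h2
            have IH := maxInter_spec (a :: ut) vt (a' :: ut') vt' w2 hw2
              (by simpa using hlu') hlv' h1 hvt
            have hba' : b' :: w2 = a :: w2 := by rw [← hE]
            rw [hba']
            refine ⟨cons_le_cons' a (IH.1.trans (le_max_right M1 M2)), fun he => ?_⟩
            have hweq : w2 = max M1 M2 := by injection he
            have hw2M2 : w2 = M2 := le_antisymm IH.1 (hweq ▸ le_max_right M1 M2)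
            rcases IH.2 hw2M2 with ⟨e1, e2⟩
            exact ⟨e1, by rw [e2]⟩
      · -- b < a : maxInter = a :: maxInter ut (b :: vt)
        rw [if_pos hba]
        rcases hw with hw | hw <;> rcases List.mem_map.mp hw with ⟨w2, hw2, rfl⟩
        · rcases lt_or_eq_of_le ha' with halt | hae
          · have hlt := cons_lt_cons_of_head_lt halt w2 (maxInter ut (b :: vt))
            exact ⟨hlt.le, fun he => absurd he (ne_of_lt hlt)⟩
          · subst hae
            have hut : ut' ≤ ut := tail_le_of_cons_le h1
            have IH := maxInter_spec ut (b :: vt) ut' (b' :: vt') w2 hw2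
              hlu' (by simpa using hlv') hut h2
            refine ⟨cons_le_cons' a' IH.1, fun he => ?_⟩
            have hweq : w2 = maxInter ut (b :: vt) := by injection he
            rcases IH.2 hweq with ⟨e1, e2⟩
            exact ⟨by rw [e1], e2⟩
        · have hlt := cons_lt_cons_of_head_lt (lt_of_le_of_lt hb' hba) w2
            (maxInter ut (b :: vt))
          exact ⟨hlt.le, fun he => absurd he (ne_of_lt hlt)⟩
  termination_by u v => u.length + v.length

end Ord
end IotaMulAux

section Algebra
variable {R : Type*} [CommRing R] {u : Set (R → R)}

theorem iterApp_append (l₁ l₂ : List (R → R)) (x : R) :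
    iterApp (l₁ ++ l₂) x = iterApp l₂ (iterApp l₁ x) := by
  induction l₁ generalizing x with
  | nil => rfl
  | cons D l ih => simp [iterApp, ih]

variable (hu : ∀ D ∈ u, IsDerivation D)
include hu

theorem deriv_zero_of_mem_u {D : R → R} (hD : D ∈ u) : D 0 = 0 := by
  have h := (hu D hD).1 0 0
  simp only [add_zero] at h
  have h2 : D 0 + D 0 = D 0 + 0 := by rw [add_zero, ← h]
  exact add_left_cancel h2

theorem iterApp_zero {Ds : List (R → R)} (hDs : ∀ D ∈ Ds, D ∈ u) :
    iterApp Ds (0 : R) = 0 := by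
  induction Ds with
  | nil => rfl
  | cons D l ih =>
    show iterApp l (D 0) = 0
    rw [deriv_zero_of_mem_u hu (hDs D (List.mem_cons_self))]
    exact ih fun E hE => hDs E (List.mem_cons_of_mem _ hE)

theorem iterApp_add {Ds : List (R → R)} (hDs : ∀ D ∈ Ds, D ∈ u) (a b : R) :
    iterApp Ds (a + b) = iterApp Ds a + iterApp Ds b := by
  induction Ds generalizing a b with
  | nil => rfl
  | cons D l ih =>
    show iterApp l (D (a + b)) = iterApp l (D a) + iterApp l (D b)
    rw [(hu D (hDs D (List.mem_cons_self))).1 a b]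
    exact ih (fun E hE => hDs E (List.mem_cons_of_mem _ hE)) _ _

theorem kill {i : ℕ} {x : R} (hx : x ∈ SocleGNat u i) {Ds : List (R → R)}
    (hDs : ∀ D ∈ Ds, D ∈ u) (hlen : i + 1 ≤ Ds.length) : iterApp Ds x = 0 := by
  conv_lhs => rw [← List.take_append_drop (i + 1) Ds]
  rw [iterApp_append]
  have h1 : iterApp (Ds.take (i + 1)) x = 0 :=
    hx _ (fun D hD => hDs D (List.take_subset _ _ hD))
      (by rw [List.length_take]; omega)
  rw [h1]
  exact iterApp_zero hu fun D hD => hDs D (List.drop_subset _ _ hD)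

theorem iterApp_mul {Ds : List (R → R)} (hDs : ∀ D ∈ Ds, D ∈ u) (x y : R) :
    iterApp Ds (x * y) =
      ((IotaMulAux.splittings Ds).map fun p => iterApp p.1 x * iterApp p.2 y).sum := by
  induction Ds generalizing x y with
  | nil => simp [iterApp, IotaMulAux.splittings]
  | cons D l ih =>
    have hD : D ∈ u := hDs D (List.mem_cons_self)
    have hl : ∀ E ∈ l, E ∈ u := fun E hE => hDs E (List.mem_cons_of_mem _ hE)
    show iterApp l (D (x * y)) = _
    rw [(hu D hD).2 x y, iterApp_add hu hl, ih hl (D x) y, ih hl x (D y)]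
    simp only [IotaMulAux.splittings, List.map_append, List.map_map, List.sum_append]
    congr 1 <;> refine congrArg List.sum (List.map_congr_left fun p _ => ?_) <;> rfl

theorem mul_mem_socle {i j : ℕ} {x y : R} (hx : x ∈ SocleGNat u i) (hy : y ∈ SocleGNat u j) :
    x * y ∈ SocleGNat u (i + j) := by
  intro Ds hDs hlen
  rw [iterApp_mul hu hDs]
  apply List.sum_eq_zero
  intro t ht
  rcases List.mem_map.mp ht with ⟨p, hp, rfl⟩
  have hl := IotaMulAux.splittings_length hp
  have hsub := IotaMulAux.splittings_subset hp
  by_cases hc : i + 1 ≤ p.1.length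
  · rw [kill hu hx (fun D hD => hDs D (hsub.1 D hD)) hc, zero_mul]
  · have hc2 : j + 1 ≤ p.2.length := by omega
    rw [kill hu hy (fun D hD => hDs D (hsub.2 D hD)) hc2, mul_zero]


end Algebra
theorem sum_eq_nsmul_aux {R : Type*} [CommRing R] {L : List R} {c : R} (hc : c ≠ 0)
    (h : ∀ t ∈ L, t = 0 ∨ t = c) :
    ∃ k : ℕ, L.sum = k • c ∧ (c ∈ L → k ≠ 0) := by
  induction L with
  | nil => exact ⟨0, by simp, by simp⟩
  | cons t L ih =>
    obtain ⟨k, hk, hkm⟩ := ih fun t' ht' => h t' (List.mem_cons_of_mem _ ht')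
    rcases h t (List.mem_cons_self) with rfl | rfl
    · refine ⟨k, by simp [hk], fun hcm => ?_⟩
      rcases List.mem_cons.mp hcm with he | hm
      · exact absurd he hc
      · exact hkm hm
    · exact ⟨k + 1, by rw [List.sum_cons, hk, succ_nsmul, add_comm], fun _ => Nat.succ_ne_zero k⟩

theorem list_sum_ne_zero {R : Type*} [CommRing R] [IsDomain R] [CharZero R]
    {L : List R} {c : R} (hc : c ≠ 0) (h : ∀ t ∈ L, t = 0 ∨ t = c) (hm : c ∈ L) :
    L.sum ≠ 0 := by
  obtain ⟨k, hk, hkm⟩ := sum_eq_nsmul_aux hc h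
  rw [hk, nsmul_eq_mul]
  exact mul_ne_zero (Nat.cast_ne_zero.mpr (hkm hm)) hc

theorem exists_witness_word {R : Type*} [CommRing R] [IsDomain R] [CharZero R]
    {u : Set (R → R)} (hu : ∀ D ∈ u, IsDerivation D) {i j : ℕ} {x y : R}
    (hx : x ∈ SocleGNat u i) (hy : y ∈ SocleGNat u j)
    {wx wy : List (R → R)} (hwxu : ∀ D ∈ wx, D ∈ u) (hwxl : wx.length = i)
    (hwxn : iterApp wx x ≠ 0) (hwyu : ∀ D ∈ wy, D ∈ u) (hwyl : wy.length = j)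
    (hwyn : iterApp wy y ≠ 0) :
    ∃ w : List (R → R), (∀ D ∈ w, D ∈ u) ∧ w.length = i + j ∧ iterApp w (x * y) ≠ 0 := by
  classical
  set A : List (R → R) := wx ++ wy with hA
  set m := A.length with hm
  set ρ : List (Fin m) → List (R → R) := fun l => l.map A.get with hρ
  have hρu : ∀ l : List (Fin m), ∀ D ∈ ρ l, D ∈ u := by
    intro l D hD
    rcases List.mem_map.mp hD with ⟨k, _, rfl⟩
    have hmem : A.get k ∈ A := by have := List.get_mem A k; simpa using this
    rcases List.mem_append.mp hmem with h | h
    exacts [hwxu _ h, hwyu _ h]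
  have hρlen : ∀ l : List (Fin m), (ρ l).length = l.length := fun l => List.length_map _
  have hreal : ∀ L : List (R → R), (∀ e ∈ L, e ∈ A) → ∃ l : List (Fin m), ρ l = L := by
    intro L
    induction L with
    | nil => exact fun _ => ⟨[], rfl⟩
    | cons e L ih =>
      intro h
      rcases List.mem_iff_get.mp (h e (List.mem_cons_self)) with ⟨k, hk⟩
      rcases ih (fun e' he' => h e' (List.mem_cons_of_mem _ he')) with ⟨l, hl⟩
      exact ⟨k :: l, by simp only [hρ, List.map_cons] at hl ⊢; rw [hl, hk]⟩
  obtain ⟨ax, hax⟩ := hreal wx fun e he => List.mem_append.mpr (Or.inl he)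
  obtain ⟨ay, hay⟩ := hreal wy fun e he => List.mem_append.mpr (Or.inr he)
  set Sx : Set (List (Fin m)) := {l | l.length = i ∧ iterApp (ρ l) x ≠ 0} with hSx
  set Sy : Set (List (Fin m)) := {l | l.length = j ∧ iterApp (ρ l) y ≠ 0} with hSy
  have hSxfin : Sx.Finite := (List.finite_length_eq (Fin m) i).subset fun l hl => hl.1
  have hSyfin : Sy.Finite := (List.finite_length_eq (Fin m) j).subset fun l hl => hl.1
  have haxS : ax ∈ Sx := by
    constructor
    · have := congrArg List.length hax
      rw [hρlen] at this
      rw [this, hwxl]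
    · rw [hax]; exact hwxn
  have hayS : ay ∈ Sy := by
    constructor
    · have := congrArg List.length hay
      rw [hρlen] at this
      rw [this, hwyl]
    · rw [hay]; exact hwyn
  have htxne : hSxfin.toFinset.Nonempty := ⟨ax, hSxfin.mem_toFinset.mpr haxS⟩
  have htyne : hSyfin.toFinset.Nonempty := ⟨ay, hSyfin.mem_toFinset.mpr hayS⟩
  set p := hSxfin.toFinset.max' htxne with hp
  set q := hSyfin.toFinset.max' htyne with hq
  have hpS : p ∈ Sx := hSxfin.mem_toFinset.mp (hSxfin.toFinset.max'_mem htxne)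
  have hqS : q ∈ Sy := hSyfin.mem_toFinset.mp (hSyfin.toFinset.max'_mem htyne)
  have hpmax : ∀ a ∈ Sx, a ≤ p := fun a ha => hSxfin.toFinset.le_max' a (hSxfin.mem_toFinset.mpr ha)
  have hqmax : ∀ a ∈ Sy, a ≤ q := fun a ha => hSyfin.toFinset.le_max' a (hSyfin.mem_toFinset.mpr ha)
  set w0 := IotaMulAux.maxInter p q with hw0def
  have hw0 : w0 ∈ IotaMulAux.interleavings p q := IotaMulAux.maxInter_mem p q
  have hw0len : w0.length = i + j := by
    have h1 := IotaMulAux.splittings_length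
      (IotaMulAux.mem_splittings_of_mem_interleavings p q w0 hw0)
    simp only at h1
    rw [← h1, hpS.1, hqS.1]
  refine ⟨ρ w0, hρu w0, by rw [hρlen, hw0len], ?_⟩
  rw [iterApp_mul hu (hρu w0)]
  set c := iterApp (ρ p) x * iterApp (ρ q) y with hc
  have hcne : c ≠ 0 := mul_ne_zero hpS.2 hqS.2
  apply list_sum_ne_zero hcne
  · intro t ht
    rcases List.mem_map.mp ht with ⟨r, hr, rfl⟩
    rw [hρ, IotaMulAux.splittings_map] at hr
    rcases List.mem_map.mp hr with ⟨r0, hr0, rfl⟩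
    simp only
    have hlen0 := IotaMulAux.splittings_length hr0
    rw [hw0len] at hlen0
    by_cases h1 : i + 1 ≤ r0.1.length
    · left; rw [kill hu hx (hρu _) (by rw [hρlen]; omega), zero_mul]
    · by_cases h2 : j + 1 ≤ r0.2.length
      · left; rw [kill hu hy (hρu _) (by rw [hρlen]; omega), mul_zero]
      · have hl1 : r0.1.length = i := by omega
        have hl2 : r0.2.length = j := by omega
        by_cases hz1 : iterApp (ρ r0.1) x = 0
        · left; rw [hz1, zero_mul]
        · by_cases hz2 : iterApp (ρ r0.2) y = 0
          · left; rw [hz2, mul_zero]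
          · right
            have h1S : r0.1 ∈ Sx := ⟨hl1, hz1⟩
            have h2S : r0.2 ∈ Sy := ⟨hl2, hz2⟩
            have hw0int : w0 ∈ IotaMulAux.interleavings r0.1 r0.2 :=
              IotaMulAux.mem_interleavings_of_mem_splittings hr0
            have hspec := IotaMulAux.maxInter_spec p q r0.1 r0.2 w0 hw0int
              (hl1.trans hpS.1.symm) (hl2.trans hqS.1.symm) (hpmax _ h1S) (hqmax _ h2S)
            rcases hspec.2 rfl with ⟨e1, e2⟩
            rw [e1, e2]
  · have hpq : ((p, q) : _ × _) ∈ IotaMulAux.splittings w0 :=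
      IotaMulAux.mem_splittings_of_mem_interleavings p q w0 hw0
    have hpq2 : ((ρ p, ρ q) : _ × _) ∈ IotaMulAux.splittings (ρ w0) := by
      rw [hρ, IotaMulAux.splittings_map]
      exact List.mem_map.mpr ⟨(p, q), hpq, rfl⟩
    exact List.mem_map.mpr ⟨(ρ p, ρ q), hpq2, rfl⟩

theorem iota_witness {R : Type*} [CommRing R] {u : Set (R → R)}
    (hexh : ∀ x : R, ∃ i : ℕ, x ∈ SocleGNat u i) (z : R) (hz : z ≠ 0) :
    ∃ wz : List (R → R), (∀ D ∈ wz, D ∈ u) ∧ wz.length = iota u z ∧ iterApp wz z ≠ 0 := by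
  cases hiz : iota u z with
  | zero => exact ⟨[], by simp, by simp, hz⟩
  | succ k =>
    have hk : z ∉ SocleGNat u k := by
      intro hmem
      have hle : iota u z ≤ k := Nat.sInf_le hmem
      omega
    simp only [SocleGNat, Set.mem_setOf_eq] at hk
    push_neg at hk
    obtain ⟨Ds, hDs, hlen, hne⟩ := hk
    exact ⟨Ds, hDs, by omega, hne⟩

/-- In an integral domain of characteristic zero, `ι` is additive:
`ι(x * y) = ι(x) + ι(y)` for nonzero `x, y`. -/
theorem iota_mul {R : Type*} [CommRing R] [IsDomain R] [CharZero R]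
    (u : Set (R → R)) (hu : ∀ D ∈ u, IsDerivation D)
    (hexh : ∀ x : R, ∃ i : ℕ, x ∈ SocleGNat u i)
    (x y : R) (hx : x ≠ 0) (hy : y ≠ 0) :
    iota u (x * y) = iota u x + iota u y := by
  have hxG : x ∈ SocleGNat u (iota u x) := Nat.sInf_mem (hexh x)
  have hyG : y ∈ SocleGNat u (iota u y) := Nat.sInf_mem (hexh y)
  obtain ⟨wx, hwxu, hwxl, hwxn⟩ := iota_witness hexh x hx
  obtain ⟨wy, hwyu, hwyl, hwyn⟩ := iota_witness hexh y hy
  obtain ⟨w, hwu, hwlen, hwne⟩ :=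
    exists_witness_word hu hxG hyG hwxu hwxl hwxn hwyu hwyl hwyn
  apply le_antisymm
  · exact Nat.sInf_le (mul_mem_socle hu hxG hyG)
  · by_contra hlt
    push_neg at hlt
    have hmem : x * y ∈ SocleGNat u (iota u (x * y)) := Nat.sInf_mem (hexh (x * y))
    exact hwne (kill hu hmem hwu (by omega))
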